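/- arXiv:2210.01945 — 3 statements merged into one kernel-verified Lean document; each statement's English description precedes it below -/
import Mathlib

section
/- On an n-dimensional gradient Ricci soliton (n ≥ 3) with Ric + Hess f = ρg and λ = 2ρ, the tensor D defined by D_{ijk} = (1/(n−2))(R_{jk}∇_i f − R_{ik}∇_j f) + (1/(2(n−1)(n−2)))(g_{jk}∇_i R − g_{ik}∇_j R) − (R/((n−1)(n−2)))(g_{jk}∇_i f − g_{ik}∇_j f) satisfies the pointwise norm identity: |D|² = (2/(n−2)²)|Ric|²|∇f|² − (1/(2(n−2)²))|∇R|² − (1/(2(n−1)(n−2)²))|2R∇f − ∇R|². -/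
/-- The Cao–Chen 3-tensor `D_{ijk}` of a gradient Ricci soliton, in an orthonormal
frame (`g_{jk} = δ_{jk}`):
`D_{ijk} = (1/(n−2))(R_{jk}∇_i f − R_{ik}∇_j f)
 + (1/(2(n−1)(n−2)))(g_{jk}∇_i R − g_{ik}∇_j R)
 − (R/((n−1)(n−2)))(g_{jk}∇_i f − g_{ik}∇_j f)`. -/
noncomputable def Dtensor (n : ℕ) (R : ℝ) (gradf gradR : Fin n → ℝ)
    (Ric : Matrix (Fin n) (Fin n) ℝ) (i j k : Fin n) : ℝ :=
  (1 / ((n : ℝ) - 2)) * (Ric j k * gradf i - Ric i k * gradf j)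
  + (1 / (2 * ((n : ℝ) - 1) * ((n : ℝ) - 2)))
      * ((if j = k then (1 : ℝ) else 0) * gradR i - (if i = k then (1 : ℝ) else 0) * gradR j)
  - (R / (((n : ℝ) - 1) * ((n : ℝ) - 2)))
      * ((if j = k then (1 : ℝ) else 0) * gradf i - (if i = k then (1 : ℝ) else 0) * gradf j)

def delta (n : ℕ) : Matrix (Fin n) (Fin n) ℝ := fun i j => if i = j then 1 else 0

lemma swap3 {n : ℕ} (f : Fin n → Fin n → Fin n → ℝ) :
    ∑ i, ∑ j, ∑ k, f i j k = ∑ k, ∑ j, ∑ i, f i j k := by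
  rw [Finset.sum_comm]
  rw [show (∑ j, ∑ i, ∑ k, f i j k) = ∑ j, ∑ k, ∑ i, f i j k from
    Finset.sum_congr rfl fun j _ => Finset.sum_comm]
  rw [Finset.sum_comm]

lemma Tsum {n : ℕ} (M N : Matrix (Fin n) (Fin n) ℝ) (x y : Fin n → ℝ) :
    ∑ i, ∑ j, ∑ k, (M j k * x i - M i k * x j) * (N j k * y i - N i k * y j)
      = 2 * (∑ j, ∑ k, M j k * N j k) * (∑ i, x i * y i)
        - 2 * ∑ k, (∑ j, M j k * y j) * (∑ i, N i k * x i) := by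
  have h : ∀ i j k : Fin n, (M j k * x i - M i k * x j) * (N j k * y i - N i k * y j)
      = (x i * y i) * (M j k * N j k) + (x j * y j) * (M i k * N i k)
        - ((M j k * y j) * (N i k * x i) + (M i k * y i) * (N j k * x j)) := by
    intro i j k; ring
  have c1 : ∑ i, ∑ j, ∑ k, (M j k * y j) * (N i k * x i)
      = ∑ k, (∑ j, M j k * y j) * (∑ i, N i k * x i) := by
    rw [swap3]
    simp_rw [← Finset.mul_sum, ← Finset.sum_mul]
  have c2 : ∑ i, ∑ j, ∑ k, (M i k * y i) * (N j k * x j)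
      = ∑ k, (∑ j, M j k * y j) * (∑ i, N i k * x i) := by
    rw [swap3]
    simp_rw [← Finset.sum_mul, ← Finset.mul_sum]
  simp_rw [h, Finset.sum_sub_distrib, Finset.sum_add_distrib]
  rw [c1, c2]
  simp_rw [← Finset.mul_sum, ← Finset.sum_mul]
  rw [← Finset.mul_sum]
  ring

/-- pointwise norm identity for the `D`-tensor of a gradient Ricci soliton,
using the soliton identities `∇R = 2Ric(∇f)` and `R + |∇f|² = λf`. -/
theorem stmt_7 (n : ℕ) (hn : 3 ≤ n) (ρ lam R f : ℝ) (hlam : lam = 2 * ρ)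
    (gradf gradR : Fin n → ℝ) (Ric : Matrix (Fin n) (Fin n) ℝ)
    (hsymm : Ric.IsSymm) (htrace : Ric.trace = R)
    (hBianchi : ∀ i, gradR i = 2 * ∑ j, Ric i j * gradf j)
    (hnorm : R + ∑ i, (gradf i) ^ 2 = lam * f) :
    ∑ i, ∑ j, ∑ k, (Dtensor n R gradf gradR Ric i j k) ^ 2
      = (2 / ((n : ℝ) - 2) ^ 2) * (∑ i, ∑ j, (Ric i j) ^ 2) * (∑ i, (gradf i) ^ 2)
        - (1 / (2 * ((n : ℝ) - 2) ^ 2)) * (∑ i, (gradR i) ^ 2)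
        - (1 / (2 * ((n : ℝ) - 1) * ((n : ℝ) - 2) ^ 2))
            * (∑ i, (2 * R * gradf i - gradR i) ^ 2) := by
  have hn3 : (3:ℝ) ≤ (n:ℝ) := by exact_mod_cast hn
  have hn2 : ((n:ℝ) - 2) ≠ 0 := by intro h; linarith [sub_eq_zero.mp h]
  have hn1 : ((n:ℝ) - 1) ≠ 0 := by intro h; linarith [sub_eq_zero.mp h]
  -- symmetry
  have hsym' : ∀ i k : Fin n, Ric i k = Ric k i := fun i k => (hsymm.apply k i)
  -- soliton: columns of Ric contracted with ∇f
  have hRu : ∀ k : Fin n, ∑ i, Ric i k * gradf i = gradR k / 2 := by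
    intro k
    have : ∑ i, Ric i k * gradf i = ∑ i, Ric k i * gradf i :=
      Finset.sum_congr rfl fun i _ => by rw [hsym']
    rw [this, hBianchi k]; ring
  -- delta contraction
  have hdel : ∀ (w : Fin n → ℝ) (k : Fin n), ∑ i, delta n i k * w i = w k := by
    intro w k
    simp [delta, ite_mul, Finset.sum_ite_eq']
  -- trace
  have h1 : ∑ j, ∑ k, Ric j k * delta n j k = R := by
    rw [← htrace]
    simp [delta, mul_ite, Finset.sum_ite_eq, Matrix.trace, Matrix.diag]
  have h2 : ∑ j, ∑ k, delta n j k * delta n j k = (n:ℝ) := by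
    simp [delta, ite_mul, Finset.sum_ite_eq]
  -- cross contraction values
  have hA3 : ∑ k, (gradR k / 2) * (gradR k / 2) = (∑ k, gradR k ^ 2) / 4 := by
    rw [Finset.sum_div]; exact Finset.sum_congr rfl fun k _ => by ring
  have hA4 : ∑ k : Fin n, gradR k * gradR k = ∑ k, gradR k ^ 2 :=
    Finset.sum_congr rfl fun k _ => (sq (gradR k)).symm
  have hUU : ∑ k : Fin n, gradf k * gradf k = ∑ k, gradf k ^ 2 :=
    Finset.sum_congr rfl fun k _ => (sq (gradf k)).symm
  have hRR : ∑ j : Fin n, ∑ k, Ric j k * Ric j k = ∑ j, ∑ k, Ric j k ^ 2 :=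
    Finset.sum_congr rfl fun j _ => Finset.sum_congr rfl fun k _ => (sq (Ric j k)).symm
  have hA5 : ∑ k, (gradR k / 2) * gradf k = (∑ k, gradf k * gradR k) / 2 := by
    rw [Finset.sum_div]; exact Finset.sum_congr rfl fun k _ => by ring
  have h7 : ∑ i : Fin n, gradR i * gradf i = ∑ i, gradf i * gradR i :=
    Finset.sum_congr rfl fun i _ => mul_comm _ _
  have hcross : ∑ k, (∑ j, Ric j k * gradR j) * gradf k = (∑ k, gradR k ^ 2) / 2 := by
    simp_rw [Finset.sum_mul]
    rw [Finset.sum_comm]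
    rw [show (∑ j, ∑ k, Ric j k * gradR j * gradf k)
        = ∑ j, gradR j * (gradR j / 2) from Finset.sum_congr rfl fun j _ => by
      have hb : ∑ k, Ric j k * gradf k = gradR j / 2 := by rw [hBianchi j]; ring
      rw [show (∑ k, Ric j k * gradR j * gradf k)
          = gradR j * ∑ k, Ric j k * gradf k from by
        rw [Finset.mul_sum]; exact Finset.sum_congr rfl fun k _ => by ring]
      rw [hb]]
    rw [Finset.sum_div]; exact Finset.sum_congr rfl fun j _ => by ring
  have hS : ∑ i, (2 * R * gradf i - gradR i) ^ 2
      = 4 * R ^ 2 * (∑ i, gradf i ^ 2) - 4 * R * (∑ i, gradf i * gradR i)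
        + ∑ i, gradR i ^ 2 := by
    have e : ∀ i, (2 * R * gradf i - gradR i) ^ 2
        = 4 * R ^ 2 * gradf i ^ 2 - 4 * R * (gradf i * gradR i) + gradR i ^ 2 :=
      fun i => by ring
    simp_rw [e, Finset.sum_add_distrib, Finset.sum_sub_distrib, ← Finset.mul_sum]
  have hD : ∀ i j k : Fin n, Dtensor n R gradf gradR Ric i j k ^ 2
      = (1/((n:ℝ)-2))^2 * ((Ric j k * gradf i - Ric i k * gradf j) * (Ric j k * gradf i - Ric i k * gradf j))
      + (1/(2*((n:ℝ)-1)*((n:ℝ)-2)))^2 * ((delta n j k * gradR i - delta n i k * gradR j) * (delta n j k * gradR i - delta n i k * gradR j))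
      + (R/(((n:ℝ)-1)*((n:ℝ)-2)))^2 * ((delta n j k * gradf i - delta n i k * gradf j) * (delta n j k * gradf i - delta n i k * gradf j))
      + 2*(1/((n:ℝ)-2))*(1/(2*((n:ℝ)-1)*((n:ℝ)-2))) * ((Ric j k * gradf i - Ric i k * gradf j) * (delta n j k * gradR i - delta n i k * gradR j))
      - 2*(1/((n:ℝ)-2))*(R/(((n:ℝ)-1)*((n:ℝ)-2))) * ((Ric j k * gradf i - Ric i k * gradf j) * (delta n j k * gradf i - delta n i k * gradf j))
      - 2*(1/(2*((n:ℝ)-1)*((n:ℝ)-2)))*(R/(((n:ℝ)-1)*((n:ℝ)-2))) * ((delta n j k * gradR i - delta n i k * gradR j) * (delta n j k * gradf i - delta n i k * gradf j)) := by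
    intro i j k
    simp only [Dtensor, delta]
    ring
  simp_rw [hD]
  simp only [Finset.sum_add_distrib, Finset.sum_sub_distrib]
  simp_rw [← Finset.mul_sum]
  rw [Tsum Ric Ric gradf gradf, Tsum (delta n) (delta n) gradR gradR,
    Tsum (delta n) (delta n) gradf gradf, Tsum Ric (delta n) gradf gradR,
    Tsum Ric (delta n) gradf gradf, Tsum (delta n) (delta n) gradR gradf]
  simp_rw [hdel, hRu]
  rw [h1, h2, hA3, hA4, hUU, hRR, hA5, h7, hcross, hS]
  field_simp
  ring
end

section
/- On an n-dimensional gradient Ricci soliton (n ≥ 3) with Ric + Hess f = ρg, λ = 2ρ, and normalized so that R + |∇f|² = λf, the following pointwise identity holds: (n−2)²|D|² + |2R∇f − ∇R|²/(2(n−1)) = |∇f|²⟨∇R,∇f⟩ − |∇f|²ΔR + λR|∇f|² − (1/2)|∇R|². -/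
/-- The auxiliary vector `c_i = (∇R)_i/(2(n−1)) − R(∇f)_i/(n−1)`. -/
noncomputable def cvec (n : ℕ) (R : ℝ) (gradf gradR : Fin n → ℝ) (i : Fin n) : ℝ :=
  gradR i / (2*((n:ℝ)-1)) - R * gradf i / ((n:ℝ)-1)

private lemma sum_swap_aux {n : ℕ} (u v : Fin n → ℝ) (M : Fin n → Fin n → ℝ) :
    ∑ j, u j * (∑ k, M j k * v k) = ∑ k, v k * (∑ j, M j k * u j) := by
  simp_rw [Finset.mul_sum]
  rw [Finset.sum_comm]
  exact Finset.sum_congr rfl fun k _ => Finset.sum_congr rfl fun j _ => by ring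

private lemma sumk_aux {n : ℕ} (A : Fin n → ℝ) (u v : ℝ) (i j : Fin n) :
    ∑ k, (A k + ((if j = k then u else 0) - (if i = k then v else 0)))^2
    = (∑ k, (A k)^2) + 2*A j*u - 2*A i*v + u^2 + v^2 - (if j = i then 2*u*v else 0) := by
  have h : ∀ k, (A k + ((if j = k then u else 0) - (if i = k then v else 0)))^2
      = (A k)^2 + ((if j = k then 2*A k*u + u^2 else 0) + (if i = k then v^2 - 2*A k*v else 0)
        - (if i = k then (if j = k then 2*u*v else 0) else 0)) := by
    intro k; split_ifs <;> ring
  rw [Finset.sum_congr rfl (fun k _ => h k)]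
  rw [Finset.sum_add_distrib, Finset.sum_sub_distrib, Finset.sum_add_distrib]
  simp [Finset.sum_ite_eq]
  ring

set_option maxHeartbeats 1600000 in
/-- pointwise identity
`(n−2)²|D|² + |2R∇f − ∇R|²/(2(n−1)) = |∇f|²⟨∇R,∇f⟩ − |∇f|²ΔR + λR|∇f|² − |∇R|²/2`,
using the soliton identity `2|Ric|² = ⟨∇R,∇f⟩ + λR − ΔR`. -/
theorem stmt_8 (n : ℕ) (hn : 3 ≤ n) (ρ lam R f ΔR : ℝ) (hlam : lam = 2 * ρ)
    (gradf gradR : Fin n → ℝ) (Ric : Matrix (Fin n) (Fin n) ℝ)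
    (hsymm : Ric.IsSymm) (htrace : Ric.trace = R)
    (hBianchi : ∀ i, gradR i = 2 * ∑ j, Ric i j * gradf j)
    (hnorm : R + ∑ i, (gradf i) ^ 2 = lam * f)
    (hElliptic : 2 * ∑ i, ∑ j, (Ric i j) ^ 2
      = (∑ i, gradR i * gradf i) + lam * R - ΔR) :
    ((n : ℝ) - 2) ^ 2 * (∑ i, ∑ j, ∑ k, (Dtensor n R gradf gradR Ric i j k) ^ 2)
        + (∑ i, (2 * R * gradf i - gradR i) ^ 2) / (2 * ((n : ℝ) - 1))
      = (∑ i, (gradf i) ^ 2) * (∑ i, gradR i * gradf i)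
        - (∑ i, (gradf i) ^ 2) * ΔR
        + lam * R * (∑ i, (gradf i) ^ 2)
        - (1 / 2) * (∑ i, (gradR i) ^ 2) := by
  have hn1 : ((n:ℝ) - 1) ≠ 0 := by
    have : (3:ℝ) ≤ (n:ℝ) := by exact_mod_cast hn
    intro h; linarith
  have hn2 : ((n:ℝ) - 2) ≠ 0 := by
    have : (3:ℝ) ≤ (n:ℝ) := by exact_mod_cast hn
    intro h; linarith
  set c : Fin n → ℝ := cvec n R gradf gradR with hcdef
  have hB : ∀ i, ∑ j, Ric i j * gradf j = gradR i / 2 := fun i => by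
    have := hBianchi i; linarith
  have hsym : ∀ i j, Ric j i = Ric i j := fun i j => congrFun (congrFun hsymm i) j
  have hB' : ∀ k, ∑ i, Ric i k * gradf i = gradR k / 2 := fun k => by
    rw [Finset.sum_congr rfl (fun i _ => by rw [hsym i k] :
      ∀ i ∈ Finset.univ, Ric i k * gradf i = Ric k i * gradf i)]
    exact hB k
  have htr : ∑ j, Ric j j = R := by
    simpa [Matrix.trace, Matrix.diag] using htrace
  have hs2 : ∀ i, ∑ j, gradf j * (∑ k, Ric j k * Ric i k) = (∑ k, Ric i k * gradR k)/2 := by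
    intro i
    calc ∑ j, gradf j * (∑ k, Ric j k * Ric i k)
        = ∑ k, Ric i k * (∑ j, Ric j k * gradf j) :=
          sum_swap_aux gradf (fun k => Ric i k) (fun j k => Ric j k)
      _ = ∑ k, (Ric i k * gradR k)/2 := Finset.sum_congr rfl (fun k _ => by rw [hB' k]; ring)
      _ = (∑ k, Ric i k * gradR k)/2 := by rw [← Finset.sum_div]
  have hbs : ∑ i, gradf i * (∑ k, Ric i k * gradR k) = (∑ k, gradR k^2)/2 := by
    calc ∑ i, gradf i * (∑ k, Ric i k * gradR k)
        = ∑ k, gradR k * (∑ i, Ric i k * gradf i) :=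
          sum_swap_aux gradf gradR (fun i k => Ric i k)
      _ = ∑ k, gradR k^2/2 := Finset.sum_congr rfl (fun k _ => by rw [hB' k]; ring)
      _ = (∑ k, gradR k^2)/2 := by rw [← Finset.sum_div]
  have hct : ∑ i, gradf i * (∑ j, Ric i j * c j) = (∑ j, gradR j * c j)/2 := by
    calc ∑ i, gradf i * (∑ j, Ric i j * c j)
        = ∑ j, c j * (∑ i, Ric i j * gradf i) :=
          sum_swap_aux gradf c (fun i j => Ric i j)
      _ = ∑ j, (gradR j * c j)/2 := Finset.sum_congr rfl (fun j _ => by rw [hB' j]; ring)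
      _ = (∑ j, gradR j * c j)/2 := by rw [← Finset.sum_div]
  -- the pointwise description of ((n-2) * D)^2
  have hD : ∀ i j k, (((n:ℝ)-2) * Dtensor n R gradf gradR Ric i j k)^2
      = ((fun k => Ric j k * gradf i - Ric i k * gradf j) k
        + ((if j = k then c i else 0) - (if i = k then c j else 0)))^2 := by
    intro i j k
    simp only [Dtensor, hcdef, cvec]
    split_ifs <;> field_simp <;> ring
  -- inner k-sum
  have hk : ∀ i j, (∑ k, (((n:ℝ)-2) * Dtensor n R gradf gradR Ric i j k)^2)
      = gradf i^2 * (∑ k, Ric j k^2)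
        - (2*gradf i) * (gradf j * (∑ k, Ric j k * Ric i k))
        + gradf j^2 * (∑ k, Ric i k^2)
        + ((2*gradf i*c i) * Ric j j - (2*c i) * (Ric i j * gradf j))
        - ((2*gradf i) * (Ric i j * c j) - (2*Ric i i) * (gradf j * c j))
        + c i^2 + c j^2 - (if j = i then 2*c i*c j else 0) := by
    intro i j
    rw [Finset.sum_congr rfl (fun k _ => hD i j k), sumk_aux]
    have hA2 : ∑ k, (Ric j k * gradf i - Ric i k * gradf j)^2
        = gradf i^2 * (∑ k, Ric j k^2)
          - (2*gradf i) * (gradf j * (∑ k, Ric j k * Ric i k))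
          + gradf j^2 * (∑ k, Ric i k^2) := by
      have e : ∀ k, (Ric j k * gradf i - Ric i k * gradf j)^2
          = gradf i^2 * Ric j k^2 - (2*gradf i) * (gradf j * (Ric j k * Ric i k))
            + gradf j^2 * Ric i k^2 := fun k => by ring
      rw [Finset.sum_congr rfl (fun k _ => e k), Finset.sum_add_distrib,
        Finset.sum_sub_distrib, ← Finset.mul_sum, ← Finset.mul_sum, ← Finset.mul_sum,
        ← Finset.mul_sum]
    rw [hA2]
    rw [hsym j i]
    ring
  -- middle j-sum
  have hj : ∀ i, (∑ j,
      (gradf i^2 * (∑ k, Ric j k^2)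
        - (2*gradf i) * (gradf j * (∑ k, Ric j k * Ric i k))
        + gradf j^2 * (∑ k, Ric i k^2)
        + ((2*gradf i*c i) * Ric j j - (2*c i) * (Ric i j * gradf j))
        - ((2*gradf i) * (Ric i j * c j) - (2*Ric i i) * (gradf j * c j))
        + c i^2 + c j^2 - (if j = i then 2*c i*c j else 0)))
      = gradf i^2 * (∑ l, ∑ k, Ric l k^2)
        - (2*gradf i) * ((∑ k, Ric i k * gradR k)/2)
        + (∑ j, gradf j^2) * (∑ k, Ric i k^2)
        + ((2*gradf i*c i) * R - (2*c i) * (gradR i / 2))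
        - ((2*gradf i) * (∑ j, Ric i j * c j) - (2*Ric i i) * (∑ j, gradf j * c j))
        + (n:ℝ) * c i^2 + (∑ j, c j^2) - 2*c i*c i := by
    intro i
    simp only [Finset.sum_sub_distrib, Finset.sum_add_distrib, ← Finset.mul_sum,
      ← Finset.sum_mul, Finset.sum_const, Finset.card_univ, Fintype.card_fin,
      nsmul_eq_mul, Finset.sum_ite_eq', Finset.mem_univ, if_true]
    rw [hs2 i, htr, hB i]
  -- outer i-sum
  have hS : ∑ i, ∑ j, ∑ k, (((n:ℝ)-2) * Dtensor n R gradf gradR Ric i j k)^2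
      = 2 * ((∑ i, gradf i^2) * (∑ l, ∑ k, Ric l k^2))
        - (1/2) * (∑ k, gradR k^2)
        + 4*R*(∑ j, gradf j * c j)
        - 2*(∑ j, gradR j * c j)
        + (2*(n:ℝ) - 2) * (∑ j, c j^2) := by
    rw [Finset.sum_congr rfl
      (fun i _ => by rw [Finset.sum_congr rfl (fun j _ => hk i j), hj i])]
    rw [Finset.sum_congr rfl (fun i _ => (by ring :
      gradf i^2 * (∑ l, ∑ k, Ric l k^2)
        - (2*gradf i) * ((∑ k, Ric i k * gradR k)/2)
        + (∑ j, gradf j^2) * (∑ k, Ric i k^2)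
        + ((2*gradf i*c i) * R - (2*c i) * (gradR i / 2))
        - ((2*gradf i) * (∑ j, Ric i j * c j) - (2*Ric i i) * (∑ j, gradf j * c j))
        + (n:ℝ) * c i^2 + (∑ j, c j^2) - 2*c i*c i
      = gradf i^2 * (∑ l, ∑ k, Ric l k^2)
        - gradf i * (∑ k, Ric i k * gradR k)
        + (∑ j, gradf j^2) * (∑ k, Ric i k^2)
        + ((gradf i * c i) * (2*R) - gradR i * c i)
        - (2 * (gradf i * (∑ j, Ric i j * c j)) - Ric i i * (2 * (∑ j, gradf j * c j)))
        + (n:ℝ) * c i^2 + (∑ j, c j^2) - c i^2 * 2))]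
    simp only [Finset.sum_sub_distrib, Finset.sum_add_distrib, ← Finset.mul_sum,
      ← Finset.sum_mul, Finset.sum_const, Finset.card_univ, Fintype.card_fin,
      nsmul_eq_mul]
    rw [hbs, hct, htr]
    ring
  -- scalar expansions of the c-sums
  have hAC : ∑ j, gradf j * c j
      = (∑ j, gradR j * gradf j) * (1/(2*((n:ℝ)-1))) - (∑ j, gradf j^2) * (R/((n:ℝ)-1)) := by
    rw [Finset.sum_congr rfl (fun j _ => (by simp only [hcdef, cvec]; ring :
      gradf j * c j = (gradR j * gradf j) * (1/(2*((n:ℝ)-1))) - gradf j^2 * (R/((n:ℝ)-1))))]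
    rw [Finset.sum_sub_distrib, ← Finset.sum_mul, ← Finset.sum_mul]
  have hBC : ∑ j, gradR j * c j
      = (∑ j, gradR j^2) * (1/(2*((n:ℝ)-1))) - (∑ j, gradR j * gradf j) * (R/((n:ℝ)-1)) := by
    rw [Finset.sum_congr rfl (fun j _ => (by simp only [hcdef, cvec]; ring :
      gradR j * c j = gradR j^2 * (1/(2*((n:ℝ)-1))) - (gradR j * gradf j) * (R/((n:ℝ)-1))))]
    rw [Finset.sum_sub_distrib, ← Finset.sum_mul, ← Finset.sum_mul]
  have hCC : ∑ j, c j^2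
      = (∑ j, gradR j^2) * (1/(4*((n:ℝ)-1)^2)) - (∑ j, gradR j * gradf j) * (R/((n:ℝ)-1)^2)
        + (∑ j, gradf j^2) * (R^2/((n:ℝ)-1)^2) := by
    rw [Finset.sum_congr rfl (fun j _ => (by simp only [hcdef, cvec]; field_simp; ring :
      c j^2 = gradR j^2 * (1/(4*((n:ℝ)-1)^2)) - (gradR j * gradf j) * (R/((n:ℝ)-1)^2)
        + gradf j^2 * (R^2/((n:ℝ)-1)^2)))]
    rw [Finset.sum_add_distrib, Finset.sum_sub_distrib, ← Finset.sum_mul, ← Finset.sum_mul,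
      ← Finset.sum_mul]
  have hW : ∑ i, (2 * R * gradf i - gradR i)^2
      = (∑ i, gradf i^2) * (4*R^2) - (∑ i, gradR i * gradf i) * (4*R) + (∑ i, gradR i^2) := by
    rw [Finset.sum_congr rfl (fun i _ => (by ring :
      (2 * R * gradf i - gradR i)^2
        = gradf i^2 * (4*R^2) - (gradR i * gradf i) * (4*R) + gradR i^2))]
    rw [Finset.sum_add_distrib, Finset.sum_sub_distrib, ← Finset.sum_mul, ← Finset.sum_mul]
  -- rewrite the (n-2)^2 |D|^2 term
  have hkey2 : ((n:ℝ) - 2) ^ 2 * (∑ i, ∑ j, ∑ k, (Dtensor n R gradf gradR Ric i j k) ^ 2)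
      = ∑ i, ∑ j, ∑ k, (((n:ℝ)-2) * Dtensor n R gradf gradR Ric i j k)^2 := by
    rw [Finset.mul_sum]
    refine Finset.sum_congr rfl fun i _ => ?_
    rw [Finset.mul_sum]
    refine Finset.sum_congr rfl fun j _ => ?_
    rw [Finset.mul_sum]
    exact Finset.sum_congr rfl fun k _ => by ring
  have hP : (∑ i, ∑ j, (Ric i j)^2) = ((∑ i, gradR i * gradf i) + lam * R - ΔR)/2 := by
    linarith
  rw [hkey2, hS, hW, hAC, hBC, hCC, hP]
  field_simp
  ring
end

section
/- Let (Mⁿ,g,f) be a gradient Ricci soliton with Ric + Hess f = ρg, λ = 2ρ, normalized so R + |∇f|² = λf, and let Y = ∇R + (λf − R)∇f. Then the divergence identity 2(λf − R)·div(Y) = −2(n−2)²|D|² − |2R∇f − ∇R|²/(n−1) − |∇R|² + 2(λf − R)²(ρn − R) + 2λR(λf − R) + 2λ(λf − R)|∇f|² holds pointwise. -/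
section Helpers

variable {n : ℕ}

private lemma tsum_split3 (g h e : Fin n → Fin n → Fin n → ℝ) :
    ∑ i, ∑ j, ∑ k, (g i j k + h i j k - e i j k)
      = (∑ i, ∑ j, ∑ k, g i j k) + (∑ i, ∑ j, ∑ k, h i j k)
        - (∑ i, ∑ j, ∑ k, e i j k) := by
  simp [Finset.sum_add_distrib, Finset.sum_sub_distrib]

private lemma dsum_split (g1 g2 g3 g4 g5 : Fin n → Fin n → ℝ) :
    ∑ i, ∑ j, (g1 i j + g2 i j + (g3 i j - g4 i j) - g5 i j)
      = (∑ i, ∑ j, g1 i j) + (∑ i, ∑ j, g2 i j)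
        + ((∑ i, ∑ j, g3 i j) - (∑ i, ∑ j, g4 i j)) - (∑ i, ∑ j, g5 i j) := by
  simp [Finset.sum_add_distrib, Finset.sum_sub_distrib]

private lemma sum_two (F f g : Fin n → ℝ) (c d : ℝ) (H : ∀ i, F i = c * f i - d * g i) :
    ∑ i, F i = c * (∑ i, f i) - d * (∑ i, g i) := by
  calc ∑ i, F i = ∑ i, (c * f i - d * g i) := Finset.sum_congr rfl fun i _ => H i
    _ = c * (∑ i, f i) - d * (∑ i, g i) := by
        rw [Finset.sum_sub_distrib, ← Finset.mul_sum, ← Finset.mul_sum]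

private lemma sum_three (F f g h : Fin n → ℝ) (c d e : ℝ)
    (H : ∀ i, F i = c * f i - d * g i + e * h i) :
    ∑ i, F i = c * (∑ i, f i) - d * (∑ i, g i) + e * (∑ i, h i) := by
  calc ∑ i, F i = ∑ i, (c * f i - d * g i + e * h i) := Finset.sum_congr rfl fun i _ => H i
    _ = _ := by
        rw [Finset.sum_add_distrib, Finset.sum_sub_distrib, ← Finset.mul_sum,
          ← Finset.mul_sum, ← Finset.mul_sum]

/-- Key sum computation for the Cao–Chen tensor shape. -/
private lemma sum_sq_expand (c1 R : ℝ) (a b u : Fin n → ℝ) (S : Matrix (Fin n) (Fin n) ℝ)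
    (hsym : ∀ i j, S i j = S j i)
    (htr : ∑ i, S i i = R)
    (hrow : ∀ i, ∑ j, S i j * a j = b i / 2) :
    ∑ i, ∑ j, ∑ k, (c1 * (S j k * a i - S i k * a j)
        + (if j = k then (1:ℝ) else 0) * u i - (if i = k then (1:ℝ) else 0) * u j) ^ 2
    = c1 ^ 2 * (2 * ((∑ i, ∑ j, (S i j) ^ 2) * (∑ i, (a i) ^ 2)) - (∑ i, (b i) ^ 2) / 2)
      + 2 * ((n : ℝ) - 1) * (∑ i, (u i) ^ 2)
      + 4 * c1 * (R * (∑ i, a i * u i) - (∑ i, b i * u i) / 2) := by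
  have hcol : ∀ k, ∑ j, S j k * a j = b k / 2 := by
    intro k
    rw [← hrow k]
    exact Finset.sum_congr rfl fun j _ => by rw [hsym]
  -- pointwise expansion of the square
  have hpt : ∀ i j k : Fin n,
      (c1 * (S j k * a i - S i k * a j)
        + (if j = k then (1:ℝ) else 0) * u i - (if i = k then (1:ℝ) else 0) * u j) ^ 2
      = c1 ^ 2 * (S j k * a i - S i k * a j) ^ 2
        + ((if j = k then u i ^ 2 + 2 * c1 * (S j k * a i - S i k * a j) * u i else 0)
        + ((if i = k then u j ^ 2 - 2 * c1 * (S j k * a i - S i k * a j) * u j else 0)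
        - (if j = k then (if i = k then 2 * (u i * u j) else 0) else 0))) := by
    intro i j k
    by_cases h1 : j = k <;> by_cases h2 : i = k <;> simp [h1, h2] <;> ring
  -- inner sum over k
  have hk : ∀ i j : Fin n,
      ∑ k, (c1 * (S j k * a i - S i k * a j)
        + (if j = k then (1:ℝ) else 0) * u i - (if i = k then (1:ℝ) else 0) * u j) ^ 2
      = (∑ k, c1 ^ 2 * (S j k * a i - S i k * a j) ^ 2)
        + (u i ^ 2 + u j ^ 2)
        + (2 * c1 * ((S j j * a i - S i j * a j) * u i)
            - 2 * c1 * ((S j i * a i - S i i * a j) * u j))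
        - (if i = j then 2 * (u i * u j) else 0) := by
    intro i j
    simp only [hpt]
    rw [Finset.sum_add_distrib, Finset.sum_add_distrib, Finset.sum_sub_distrib,
      Finset.sum_ite_eq, Finset.sum_ite_eq, Finset.sum_ite_eq]
    simp only [Finset.mem_univ, if_true]
    ring
  -- piece computations
  have p1 : ∑ i, ∑ j, ∑ k, (S j k) ^ 2 * (a i) ^ 2
      = (∑ i, ∑ j, (S i j) ^ 2) * (∑ i, (a i) ^ 2) := by
    have h : ∀ i : Fin n, (∑ j, ∑ k, (S j k) ^ 2) * (a i) ^ 2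
        = ∑ j, ∑ k, (S j k) ^ 2 * (a i) ^ 2 := by
      intro i
      rw [Finset.sum_mul]
      exact Finset.sum_congr rfl fun j _ => Finset.sum_mul _ _ _
    calc ∑ i, ∑ j, ∑ k, (S j k) ^ 2 * (a i) ^ 2
        = ∑ i, (∑ j, ∑ k, (S j k) ^ 2) * (a i) ^ 2 :=
          Finset.sum_congr rfl fun i _ => (h i).symm
      _ = (∑ i, ∑ j, (S i j) ^ 2) * (∑ i, (a i) ^ 2) := (Finset.mul_sum _ _ _).symm
  have p2 : ∑ i, ∑ j, ∑ k, (S i k) ^ 2 * (a j) ^ 2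
      = (∑ i, ∑ j, (S i j) ^ 2) * (∑ i, (a i) ^ 2) := by
    have h : ∀ i : Fin n, ∑ j, ∑ k, (S i k) ^ 2 * (a j) ^ 2
        = (∑ k, (S i k) ^ 2) * (∑ j, (a j) ^ 2) := by
      intro i
      rw [Finset.sum_mul_sum]
      exact Finset.sum_comm
    calc ∑ i, ∑ j, ∑ k, (S i k) ^ 2 * (a j) ^ 2
        = ∑ i, (∑ k, (S i k) ^ 2) * (∑ j, (a j) ^ 2) := Finset.sum_congr rfl fun i _ => h i
      _ = (∑ i, ∑ j, (S i j) ^ 2) * (∑ i, (a i) ^ 2) := (Finset.sum_mul _ _ _).symm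
  have p3 : ∑ i, ∑ j, ∑ k, 2 * ((S i k * a i) * (S j k * a j)) = (∑ i, (b i) ^ 2) / 2 := by
    calc ∑ i, ∑ j, ∑ k, 2 * ((S i k * a i) * (S j k * a j))
        = ∑ i, ∑ k, ∑ j, 2 * ((S i k * a i) * (S j k * a j)) :=
          Finset.sum_congr rfl fun i _ => Finset.sum_comm
      _ = ∑ k, ∑ i, ∑ j, 2 * ((S i k * a i) * (S j k * a j)) := Finset.sum_comm
      _ = ∑ k, 2 * ((∑ i, S i k * a i) * (∑ j, S j k * a j)) := by
          refine Finset.sum_congr rfl fun k _ => ?_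
          rw [Finset.sum_mul_sum, Finset.mul_sum]
          exact Finset.sum_congr rfl fun i _ => (Finset.mul_sum _ _ _).symm
      _ = ∑ k, 2 * ((b k / 2) * (b k / 2)) := by
          refine Finset.sum_congr rfl fun k _ => ?_
          rw [hcol k]
      _ = ∑ k, (1/2) * (b k) ^ 2 := Finset.sum_congr rfl fun k _ => by ring
      _ = (∑ k, (b k) ^ 2) / 2 := by rw [← Finset.mul_sum]; ring
  have h1 : ∑ i, ∑ j, ∑ k, (S j k * a i - S i k * a j) ^ 2
      = (∑ i, ∑ j, (S i j) ^ 2) * (∑ i, (a i) ^ 2)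
        + (∑ i, ∑ j, (S i j) ^ 2) * (∑ i, (a i) ^ 2) - (∑ i, (b i) ^ 2) / 2 := by
    calc ∑ i, ∑ j, ∑ k, (S j k * a i - S i k * a j) ^ 2
        = ∑ i, ∑ j, ∑ k, ((S j k) ^ 2 * (a i) ^ 2 + (S i k) ^ 2 * (a j) ^ 2
            - 2 * ((S i k * a i) * (S j k * a j))) :=
          Finset.sum_congr rfl fun i _ => Finset.sum_congr rfl fun j _ =>
            Finset.sum_congr rfl fun k _ => by ring
      _ = _ := by rw [tsum_split3, p1, p2, p3]
  have E1 : ∑ i, ∑ j, ∑ k, c1 ^ 2 * (S j k * a i - S i k * a j) ^ 2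
      = c1 ^ 2 * (2 * ((∑ i, ∑ j, (S i j) ^ 2) * (∑ i, (a i) ^ 2)) - (∑ i, (b i) ^ 2) / 2) := by
    have pull : c1 ^ 2 * (∑ i, ∑ j, ∑ k, (S j k * a i - S i k * a j) ^ 2)
        = ∑ i, ∑ j, ∑ k, c1 ^ 2 * (S j k * a i - S i k * a j) ^ 2 := by
      simp only [Finset.mul_sum]
    rw [← pull, h1]; ring
  have E2 : ∑ i : Fin n, ∑ j : Fin n, (u i ^ 2 + u j ^ 2) = 2 * (n : ℝ) * (∑ i, (u i) ^ 2) := by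
    calc ∑ i : Fin n, ∑ j : Fin n, (u i ^ 2 + u j ^ 2)
        = ∑ i : Fin n, ((n : ℝ) * u i ^ 2 + ∑ j, u j ^ 2) := by
          refine Finset.sum_congr rfl fun i _ => ?_
          rw [Finset.sum_add_distrib, Finset.sum_const, Finset.card_univ, Fintype.card_fin,
            nsmul_eq_mul]
      _ = (n : ℝ) * (∑ i, u i ^ 2) + (n : ℝ) * (∑ j, u j ^ 2) := by
          rw [Finset.sum_add_distrib, ← Finset.mul_sum, Finset.sum_const, Finset.card_univ,
            Fintype.card_fin, nsmul_eq_mul]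
      _ = 2 * (n : ℝ) * (∑ i, (u i) ^ 2) := by ring
  have E3a : ∑ i, ∑ j, 2 * c1 * ((S j j * a i - S i j * a j) * u i)
      = 2 * c1 * R * (∑ i, a i * u i) - c1 * (∑ i, b i * u i) := by
    have inner : ∀ i, ∑ j, 2 * c1 * ((S j j * a i - S i j * a j) * u i)
        = 2 * c1 * R * (a i * u i) - c1 * (b i * u i) := by
      intro i
      have step : ∑ j, 2 * c1 * ((S j j * a i - S i j * a j) * u i)
          = (2 * c1 * (a i * u i)) * (∑ j, S j j) - (2 * c1 * u i) * (∑ j, S i j * a j) := by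
        rw [Finset.mul_sum, Finset.mul_sum, ← Finset.sum_sub_distrib]
        exact Finset.sum_congr rfl fun j _ => by ring
      rw [step, htr, hrow i]; ring
    calc ∑ i, ∑ j, 2 * c1 * ((S j j * a i - S i j * a j) * u i)
        = ∑ i, (2 * c1 * R * (a i * u i) - c1 * (b i * u i)) :=
          Finset.sum_congr rfl fun i _ => inner i
      _ = _ := by rw [Finset.sum_sub_distrib, ← Finset.mul_sum, ← Finset.mul_sum]
  have E3b : ∑ i, ∑ j, 2 * c1 * ((S j i * a i - S i i * a j) * u j)
      = c1 * (∑ i, b i * u i) - 2 * c1 * R * (∑ i, a i * u i) := by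
    have inner : ∀ j, ∑ i, 2 * c1 * ((S j i * a i - S i i * a j) * u j)
        = c1 * (b j * u j) - 2 * c1 * R * (a j * u j) := by
      intro j
      have step : ∑ i, 2 * c1 * ((S j i * a i - S i i * a j) * u j)
          = (2 * c1 * u j) * (∑ i, S j i * a i) - (2 * c1 * (a j * u j)) * (∑ i, S i i) := by
        rw [Finset.mul_sum, Finset.mul_sum, ← Finset.sum_sub_distrib]
        exact Finset.sum_congr rfl fun i _ => by ring
      rw [step, htr, hrow j]; ring
    calc ∑ i, ∑ j, 2 * c1 * ((S j i * a i - S i i * a j) * u j)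
        = ∑ j, ∑ i, 2 * c1 * ((S j i * a i - S i i * a j) * u j) := Finset.sum_comm
      _ = ∑ j, (c1 * (b j * u j) - 2 * c1 * R * (a j * u j)) :=
          Finset.sum_congr rfl fun j _ => inner j
      _ = _ := by rw [Finset.sum_sub_distrib, ← Finset.mul_sum, ← Finset.mul_sum]
  have E4 : ∑ i : Fin n, ∑ j : Fin n, (if i = j then 2 * (u i * u j) else 0)
      = 2 * (∑ i, (u i) ^ 2) := by
    calc ∑ i : Fin n, ∑ j : Fin n, (if i = j then 2 * (u i * u j) else 0)
        = ∑ i : Fin n, 2 * (u i * u i) := by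
          simp only [Finset.sum_ite_eq, Finset.mem_univ, if_true]
      _ = 2 * (∑ i, (u i) ^ 2) := by
          rw [Finset.mul_sum]
          exact Finset.sum_congr rfl fun i _ => by ring
  calc ∑ i, ∑ j, ∑ k, (c1 * (S j k * a i - S i k * a j)
        + (if j = k then (1:ℝ) else 0) * u i - (if i = k then (1:ℝ) else 0) * u j) ^ 2
      = ∑ i, ∑ j, ((∑ k, c1 ^ 2 * (S j k * a i - S i k * a j) ^ 2)
          + (u i ^ 2 + u j ^ 2)
          + (2 * c1 * ((S j j * a i - S i j * a j) * u i)
              - 2 * c1 * ((S j i * a i - S i i * a j) * u j))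
          - (if i = j then 2 * (u i * u j) else 0)) :=
        Finset.sum_congr rfl fun i _ => Finset.sum_congr rfl fun j _ => hk i j
    _ = (∑ i, ∑ j, ∑ k, c1 ^ 2 * (S j k * a i - S i k * a j) ^ 2)
          + (∑ i : Fin n, ∑ j : Fin n, (u i ^ 2 + u j ^ 2))
          + ((∑ i, ∑ j, 2 * c1 * ((S j j * a i - S i j * a j) * u i))
              - (∑ i, ∑ j, 2 * c1 * ((S j i * a i - S i i * a j) * u j)))
          - (∑ i : Fin n, ∑ j : Fin n, (if i = j then 2 * (u i * u j) else 0)) :=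
        dsum_split _ _ _ _ _
    _ = _ := by rw [E1, E2, E3a, E3b, E4]; ring

end Helpers

set_option maxHeartbeats 2000000 in
/-- the Robinson–Brendle style divergence identity (Lemma 2.2) for
`Y = ∇R + (λf − R)∇f`, using `Δf = ρn − R` and the expansion of `div Y`. -/
theorem stmt_10 (n : ℕ) (hn : 3 ≤ n) (ρ lam R f ΔR Δf divY : ℝ) (hlam : lam = 2 * ρ)
    (gradf gradR : Fin n → ℝ) (Ric : Matrix (Fin n) (Fin n) ℝ)
    (hsymm : Ric.IsSymm) (htrace : Ric.trace = R)
    (hBianchi : ∀ i, gradR i = 2 * ∑ j, Ric i j * gradf j)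
    (hnorm : R + ∑ i, (gradf i) ^ 2 = lam * f)
    (hElliptic : 2 * ∑ i, ∑ j, (Ric i j) ^ 2
      = (∑ i, gradR i * gradf i) + lam * R - ΔR)
    (hlapf : Δf = ρ * (n : ℝ) - R)
    (hdivY : divY = ΔR + lam * (∑ i, (gradf i) ^ 2)
      - (∑ i, gradR i * gradf i) + (lam * f - R) * Δf) :
    2 * (lam * f - R) * divY
      = -2 * ((n : ℝ) - 2) ^ 2 * (∑ i, ∑ j, ∑ k, (Dtensor n R gradf gradR Ric i j k) ^ 2)
        - (∑ i, (2 * R * gradf i - gradR i) ^ 2) / ((n : ℝ) - 1)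
        - (∑ i, (gradR i) ^ 2)
        + 2 * (lam * f - R) ^ 2 * (ρ * (n : ℝ) - R)
        + 2 * lam * R * (lam * f - R)
        + 2 * lam * (lam * f - R) * (∑ i, (gradf i) ^ 2) := by
  have hn3 : (3 : ℝ) ≤ (n : ℝ) := by exact_mod_cast hn
  have hne2 : ((n : ℝ) - 2) ≠ 0 := by intro h; nlinarith
  have hne1 : ((n : ℝ) - 1) ≠ 0 := by intro h; nlinarith
  have hsym' : ∀ i j, Ric i j = Ric j i := fun i j => hsymm.apply j i
  have htr : ∑ i, Ric i i = R := htrace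
  have hrow : ∀ i, ∑ j, Ric i j * gradf j = gradR i / 2 := fun i => by
    rw [hBianchi i]; ring
  set c1 : ℝ := 1 / ((n : ℝ) - 2) with hc1
  set c2 : ℝ := 1 / (2 * ((n : ℝ) - 1) * ((n : ℝ) - 2)) with hc2
  set c3 : ℝ := R / (((n : ℝ) - 1) * ((n : ℝ) - 2)) with hc3
  have key := sum_sq_expand c1 R gradf gradR (fun i => c2 * gradR i - c3 * gradf i)
      Ric hsym' htr hrow
  have hDsum : ∑ i, ∑ j, ∑ k, (Dtensor n R gradf gradR Ric i j k) ^ 2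
      = ∑ i, ∑ j, ∑ k, (c1 * (Ric j k * gradf i - Ric i k * gradf j)
          + (if j = k then (1:ℝ) else 0) * (c2 * gradR i - c3 * gradf i)
          - (if i = k then (1:ℝ) else 0) * (c2 * gradR j - c3 * gradf j)) ^ 2 :=
    Finset.sum_congr rfl fun i _ => Finset.sum_congr rfl fun j _ =>
      Finset.sum_congr rfl fun k _ => by
        simp only [Dtensor, hc1, hc2, hc3]; ring
  -- expand the auxiliary sums
  have hU : ∑ i, (c2 * gradR i - c3 * gradf i) ^ 2
      = c2 ^ 2 * (∑ i, (gradR i) ^ 2) - (2 * c2 * c3) * (∑ i, gradR i * gradf i)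
        + c3 ^ 2 * (∑ i, (gradf i) ^ 2) :=
    sum_three _ _ _ _ _ _ _ (fun i => by ring)
  have hAU : ∑ i, gradf i * (c2 * gradR i - c3 * gradf i)
      = c2 * (∑ i, gradR i * gradf i) - c3 * (∑ i, (gradf i) ^ 2) :=
    sum_two _ _ _ _ _ (fun i => by ring)
  have hBU : ∑ i, gradR i * (c2 * gradR i - c3 * gradf i)
      = c2 * (∑ i, (gradR i) ^ 2) - c3 * (∑ i, gradR i * gradf i) :=
    sum_two _ _ _ _ _ (fun i => by ring)
  have hSS : ∑ i, (2 * R * gradf i - gradR i) ^ 2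
      = (4 * R ^ 2) * (∑ i, (gradf i) ^ 2) - (4 * R) * (∑ i, gradR i * gradf i)
        + 1 * (∑ i, (gradR i) ^ 2) :=
    sum_three _ _ _ _ _ _ _ (fun i => by ring)
  rw [hU, hAU, hBU] at key
  have hA : ∑ i, (gradf i) ^ 2 = lam * f - R := by linarith
  have hDR : ΔR = (∑ i, gradR i * gradf i) + lam * R - 2 * ∑ i, ∑ j, (Ric i j) ^ 2 := by
    linarith
  rw [hDsum, key, hSS, hdivY, hlapf, hDR, hA]
  rw [hc1, hc2, hc3]
  field_simp
  ring
end
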